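/- Splicing identity for the functions g_ω: Let ω = (ω_x)_{x∈ℤ} be an environment with R_i < ∞ for every i ∈ ℤ and W_j < ∞ for every j ∈ ℤ. Let ν_0 ≤ 0 < ν_1 be integers and define the spliced environment ω̃ by ω̃_x = ω_{ν_1 + x} for x ≥ 0 and ω̃_x = ω_{ν_0 + x} for x < 0. Then for every x ≤ −1, g_{ω̃}(x) − g_ω(ν_0 + x) = ( Π_{ν_0+x, ν_0−1} + Π_{ν_0+x+1, ν_0−1} ) ( R_{ν_1} − R_{ν_0} ), and consequently Σ_{x ≤ −1} | g_{ω̃}(x) − g_ω(ν_0 + x) | = (1 + 2 W_{ν_0 − 1}) | R_{ν_1} − R_{ν_0} | < ∞. -/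

import Mathlib

open MeasureTheory ProbabilityTheory Filter Set

/-- `ρ_x = (1 − ω_x)/ω_x` for an environment `ω`. -/
noncomputable def rho (env : ℤ → ℝ) (x : ℤ) : ℝ := (1 - env x) / env x

/-- `Π_{i,j} = ρ_i ρ_{i+1} ⋯ ρ_j`, with the convention `Π_{i,j} = 1` when `j < i`. -/
noncomputable def PiProd (env : ℤ → ℝ) (i j : ℤ) : ℝ :=
  ∏ m ∈ Finset.range ((j - i + 1).toNat), rho env (i + m)

/-- `R_i = Σ_{j ≥ i} Π_{i,j}` (as a real number; junk if the series diverges). -/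
noncomputable def Rser (env : ℤ → ℝ) (i : ℤ) : ℝ :=
  ∑' n : ℕ, ∏ m ∈ Finset.range (n + 1), rho env (i + m)

/-- Convergence of the series `R_i`. -/
def RserSummable (env : ℤ → ℝ) (i : ℤ) : Prop :=
  Summable (fun n : ℕ => ∏ m ∈ Finset.range (n + 1), rho env (i + m))

/-- `W_j = Σ_{i ≤ j} Π_{i,j}` (as a real number; junk if the series diverges). -/
noncomputable def Wser (env : ℤ → ℝ) (j : ℤ) : ℝ :=
  ∑' n : ℕ, ∏ m ∈ Finset.range (n + 1), rho env (j - m)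

/-- Convergence of the series `W_j`. -/
def WserSummable (env : ℤ → ℝ) (j : ℤ) : Prop :=
  Summable (fun n : ℕ => ∏ m ∈ Finset.range (n + 1), rho env (j - m))

/-- `g_ω(x) = (1/ω_x)(1 + R_{x+1})`. -/
noncomputable def gfun (env : ℤ → ℝ) (x : ℤ) : ℝ := (1 / env x) * (1 + Rser env (x + 1))

/-- `X` is (in law) a random walk in the environment `env` started at `z`, under the probability
measure `Pr`: it starts at `z` almost surely and its finite-dimensional distributions satisfy the
Markov product formula with transition probabilities `env y` to the right and `1 − env y` to the
left. -/
def IsQuenchedWalk {Ω' : Type*} [MeasurableSpace Ω'] (env : ℤ → ℝ) (Pr : Measure Ω')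
    (X : ℕ → Ω' → ℤ) (z : ℤ) : Prop :=
  Pr {ω | X 0 ω = z} = 1 ∧
  ∀ (n : ℕ) (f : ℕ → ℤ),
    Pr {ω | ∀ i ≤ n + 1, X i ω = f i} =
      Pr {ω | ∀ i ≤ n, X i ω = f i} *
        (if f (n + 1) = f n + 1 then ENNReal.ofReal (env (f n))
         else if f (n + 1) = f n - 1 then ENNReal.ofReal (1 - env (f n)) else 0)


lemma prod_reflect_int (g : ℤ → ℝ) (a : ℤ) (k : ℕ) :
    ∏ m ∈ Finset.range k, g (a + m) = ∏ m ∈ Finset.range k, g (a + (k - 1) - m) := by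
  rw [← Finset.prod_range_reflect]
  refine Finset.prod_congr rfl fun j hj => ?_
  have hj' := Finset.mem_range.mp hj
  congr 1
  omega

lemma rho_pos (env : ℤ → ℝ) (h : ∀ x : ℤ, env x ∈ Set.Ioo (0:ℝ) 1) (x : ℤ) :
    0 < rho env x :=
  div_pos (by linarith [(h x).2]) (h x).1

lemma PiProd_pos (env : ℤ → ℝ) (h : ∀ x : ℤ, env x ∈ Set.Ioo (0:ℝ) 1) (a b : ℤ) :
    0 < PiProd env a b :=
  Finset.prod_pos fun _ _ => rho_pos env h _

lemma PiProd_cons (env : ℤ → ℝ) (a b : ℤ) (h : a ≤ b) :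
    PiProd env a b = rho env a * PiProd env (a+1) b := by
  unfold PiProd
  have h1 : (b - a + 1).toNat = (b - (a+1) + 1).toNat + 1 := by omega
  rw [h1, Finset.prod_range_succ', mul_comm]
  congr 1
  · norm_num
  · refine Finset.prod_congr rfl fun m _ => ?_
    congr 1
    push_cast
    ring

lemma Rser_shift (env : ℤ → ℝ) (i : ℤ) (N : ℕ)
    (h : Summable (fun n : ℕ => ∏ m ∈ Finset.range (n+1), rho env (i + N + m))) :
    Summable (fun n : ℕ => ∏ m ∈ Finset.range (n+1), rho env (i + m)) ∧
    Rser env i = (∑ n ∈ Finset.range N, ∏ m ∈ Finset.range (n+1), rho env (i + m))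
      + (∏ m ∈ Finset.range N, rho env (i + m)) * Rser env (i + N) := by
  set f : ℕ → ℝ := fun n => ∏ m ∈ Finset.range (n+1), rho env (i + m) with hf
  have key : ∀ n : ℕ, f (n + N) =
      (∏ m ∈ Finset.range N, rho env (i + m)) *
        ∏ m ∈ Finset.range (n+1), rho env (i + N + m) := by
    intro n
    have h1 : n + N + 1 = N + (n + 1) := by omega
    rw [hf]
    simp only
    rw [h1, Finset.prod_range_add]
    congr 1
    refine Finset.prod_congr rfl fun m _ => ?_
    congr 1
    push_cast
    ring
  have hsum : Summable (fun n => f (n + N)) := by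
    simpa [key] using h.mul_left (∏ m ∈ Finset.range N, rho env (i + m))
  have hsf : Summable f := (summable_nat_add_iff N).mp hsum
  refine ⟨hsf, ?_⟩
  have h2 := Summable.sum_add_tsum_nat_add (f := f) N hsf
  have h3 : ∑' n : ℕ, f (n + N) =
      (∏ m ∈ Finset.range N, rho env (i + m)) * Rser env (i + N) := by
    rw [Rser, ← tsum_mul_left]
    exact tsum_congr key
  have h4 : Rser env i = ∑' n, f n := rfl
  rw [h4, ← h2, h3]

/-- Splicing identity for the functions `g_ω`: if `ω` is an environment with all
series `R_i` and `W_j` convergent, `ν₀ ≤ 0 < ν₁`, and `ω̃` is obtained by removing the block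
`[ν₀, ν₁)` of `ω` (i.e. `ω̃_x = ω_{ν₁+x}` for `x ≥ 0` and `ω̃_x = ω_{ν₀+x}` for `x < 0`), then for
every `x ≤ −1`,
`g_{ω̃}(x) − g_ω(ν₀+x) = (Π_{ν₀+x,ν₀−1} + Π_{ν₀+x+1,ν₀−1})(R_{ν₁} − R_{ν₀})`,
and consequently `Σ_{x ≤ −1} |g_{ω̃}(x) − g_ω(ν₀+x)| = (1 + 2W_{ν₀−1}) |R_{ν₁} − R_{ν₀}| < ∞`. -/
theorem splicing_identity_g
    (env : ℤ → ℝ) (hval : ∀ x : ℤ, env x ∈ Set.Ioo (0:ℝ) 1)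
    (hR : ∀ i : ℤ, RserSummable env i)
    (hW : ∀ j : ℤ, WserSummable env j)
    (ν0 ν1 : ℤ) (hν0 : ν0 ≤ 0) (hν1 : 0 < ν1)
    (envT : ℤ → ℝ)
    (henvT : ∀ x : ℤ, envT x = if 0 ≤ x then env (ν1 + x) else env (ν0 + x)) :
    (∀ x : ℤ, x ≤ -1 →
      gfun envT x - gfun env (ν0 + x) =
        (PiProd env (ν0 + x) (ν0 - 1) + PiProd env (ν0 + x + 1) (ν0 - 1)) *
          (Rser env ν1 - Rser env ν0)) ∧
    Summable (fun n : ℕ => |gfun envT (-1 - n) - gfun env (ν0 + (-1 - n))|) ∧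
    (∑' n : ℕ, |gfun envT (-1 - n) - gfun env (ν0 + (-1 - n))|) =
      (1 + 2 * Wser env (ν0 - 1)) * |Rser env ν1 - Rser env ν0| := by
  -- basic facts about the spliced environment
  have hTneg : ∀ y : ℤ, y < 0 → rho envT y = rho env (ν0 + y) := by
    intro y hy
    unfold rho
    rw [henvT, if_neg (by omega)]
  have hTnonneg : ∀ m : ℕ, rho envT (m : ℤ) = rho env (ν1 + m) := by
    intro m
    unfold rho
    rw [henvT, if_pos (by positivity)]
  have hT0 : Rser envT 0 = Rser env ν1 := by
    unfold Rser
    refine tsum_congr fun n => Finset.prod_congr rfl fun m _ => ?_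
    rw [show (0:ℤ) + (m:ℤ) = (m:ℤ) by ring, hTnonneg]
  have hRν1' : Summable (fun n : ℕ => ∏ m ∈ Finset.range (n+1), rho envT (0 + (m:ℤ))) := by
    have := hR ν1
    unfold RserSummable at this
    refine this.congr fun n => Finset.prod_congr rfl fun m _ => ?_
    rw [show (0:ℤ) + (m:ℤ) = (m:ℤ) by ring, hTnonneg]
  -- Part 1
  have part1 : ∀ x : ℤ, x ≤ -1 →
      gfun envT x - gfun env (ν0 + x) =
        (PiProd env (ν0 + x) (ν0 - 1) + PiProd env (ν0 + x + 1) (ν0 - 1)) *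
          (Rser env ν1 - Rser env ν0) := by
    intro x hx
    set N : ℕ := (-(x+1)).toNat with hN
    have e0 : (x + 1 : ℤ) + (N : ℤ) = 0 := by omega
    have e1 : (ν0 + x + 1 : ℤ) + (N : ℤ) = ν0 := by omega
    -- splitting for the spliced environment
    have hTsum : Summable (fun n : ℕ =>
        ∏ m ∈ Finset.range (n+1), rho envT ((x+1) + (N:ℤ) + m)) := by
      simpa only [e0] using hRν1'
    obtain ⟨hsT, hTeq⟩ := Rser_shift envT (x+1) N hTsum
    -- splitting for the original environment
    have hEsum : Summable (fun n : ℕ =>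
        ∏ m ∈ Finset.range (n+1), rho env ((ν0 + x + 1) + (N:ℤ) + m)) := by
      simpa only [e1, RserSummable] using hR ν0
    obtain ⟨hsE, hEeq⟩ := Rser_shift env (ν0 + x + 1) N hEsum
    -- the two finite sums and prefactors agree
    have hterm : ∀ m : ℕ, (m : ℤ) < N →
        rho envT ((x+1) + (m:ℤ)) = rho env ((ν0 + x + 1) + (m:ℤ)) := by
      intro m hm
      rw [hTneg _ (by omega)]
      congr 1
      ring
    have hSsum : (∑ n ∈ Finset.range N, ∏ m ∈ Finset.range (n+1), rho envT ((x+1) + (m:ℤ)))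
        = ∑ n ∈ Finset.range N, ∏ m ∈ Finset.range (n+1), rho env ((ν0 + x + 1) + (m:ℤ)) := by
      refine Finset.sum_congr rfl fun n hn => Finset.prod_congr rfl fun m hm => ?_
      have hn' := Finset.mem_range.mp hn
      have hm' := Finset.mem_range.mp hm
      exact hterm m (by omega)
    have hPieq : (∏ m ∈ Finset.range N, rho envT ((x+1) + (m:ℤ)))
        = ∏ m ∈ Finset.range N, rho env ((ν0 + x + 1) + (m:ℤ)) := by
      refine Finset.prod_congr rfl fun m hm => ?_
      have hm' := Finset.mem_range.mp hm
      exact hterm m (by omega)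
    have hPi : PiProd env (ν0 + x + 1) (ν0 - 1)
        = ∏ m ∈ Finset.range N, rho env ((ν0 + x + 1) + (m:ℤ)) := by
      unfold PiProd
      rw [show (ν0 - 1 - (ν0 + x + 1) + 1).toNat = N from by omega]
    have hRT0 : Rser envT ((x+1) + (N:ℤ)) = Rser env ν1 := by rw [e0, hT0]
    have hRE0 : Rser env ((ν0 + x + 1) + (N:ℤ)) = Rser env ν0 := by rw [e1]
    have Rdiff : Rser envT (x+1) - Rser env (ν0 + x + 1)
        = PiProd env (ν0 + x + 1) (ν0 - 1) * (Rser env ν1 - Rser env ν0) := by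
      rw [hTeq, hEeq, hSsum, hPieq, hRT0, hRE0, hPi]
      ring
    -- now the g computation
    have hω := hval (ν0 + x)
    have hωpos : (0:ℝ) < env (ν0 + x) := hω.1
    have hinv : 1 / env (ν0 + x) = rho env (ν0 + x) + 1 := by
      unfold rho
      field_simp
      ring
    have hgT : gfun envT x = (1 / env (ν0 + x)) * (1 + Rser envT (x+1)) := by
      unfold gfun
      rw [henvT, if_neg (by omega)]
    have hgE : gfun env (ν0 + x) = (1 / env (ν0 + x)) * (1 + Rser env (ν0 + x + 1)) := rfl
    rw [hgT, hgE]
    have : (1 / env (ν0 + x)) * (1 + Rser envT (x+1))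
        - (1 / env (ν0 + x)) * (1 + Rser env (ν0 + x + 1))
        = (1 / env (ν0 + x)) * (Rser envT (x+1) - Rser env (ν0 + x + 1)) := by ring
    rw [this, Rdiff, hinv, PiProd_cons env (ν0 + x) (ν0 - 1) (by omega)]
    ring
  refine ⟨part1, ?_, ?_⟩ <;>
  · -- common setup for parts 2 and 3
    have hΔ := abs_nonneg (Rser env ν1 - Rser env ν0)
    set c : ℝ := |Rser env ν1 - Rser env ν0| with hc
    set w : ℕ → ℝ := fun n => ∏ m ∈ Finset.range (n+1), rho env (ν0 - 1 - m) with hw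
    have hWsum : Summable w := hW (ν0 - 1)
    set u : ℕ → ℝ := fun n => PiProd env (ν0 + (-1 - (n:ℤ)) + 1) (ν0 - 1) with hu
    have hu0 : u 0 = 1 := by
      rw [hu]
      simp only
      unfold PiProd
      rw [show (ν0 - 1 - (ν0 + (-1 - ((0:ℕ):ℤ)) + 1) + 1).toNat = 0 from by omega]
      simp
    have husucc : ∀ n : ℕ, u (n + 1) = w n := by
      intro n
      rw [hu, hw]
      simp only
      unfold PiProd
      rw [show (ν0 - 1 - (ν0 + (-1 - ((n+1:ℕ):ℤ)) + 1) + 1).toNat = n + 1 from by omega]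
      rw [prod_reflect_int]
      refine Finset.prod_congr rfl fun m hm => ?_
      congr 1
      push_cast
      ring
    have hP1 : ∀ n : ℕ, PiProd env (ν0 + (-1 - (n:ℤ))) (ν0 - 1) = w n := by
      intro n
      rw [hw]
      simp only
      unfold PiProd
      rw [show (ν0 - 1 - (ν0 + (-1 - (n:ℤ))) + 1).toNat = n + 1 from by omega]
      rw [prod_reflect_int]
      refine Finset.prod_congr rfl fun m hm => ?_
      congr 1
      push_cast
      ring
    have habs : ∀ n : ℕ, |gfun envT (-1 - (n:ℤ)) - gfun env (ν0 + (-1 - (n:ℤ)))|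
        = (w n + u n) * c := by
      intro n
      rw [part1 (-1 - (n:ℤ)) (by omega), abs_mul, ← hc, hP1]
      have hpos : 0 < w n + u n :=
        add_pos (by rw [← hP1 n]; exact PiProd_pos env hval _ _)
          (PiProd_pos env hval _ _)
      exact congrArg (fun t => t * c) (abs_of_pos hpos)
    have husum : Summable u := by
      refine (summable_nat_add_iff 1).mp ?_
      refine hWsum.congr fun n => (husucc n).symm
    have hsum : Summable (fun n : ℕ => (w n + u n) * c) := (hWsum.add husum).mul_right c
    first
    | exact hsum.congr fun n => (habs n).symm
    | · have htu : ∑' n, u n = 1 + ∑' n, w n := by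
          rw [Summable.tsum_eq_zero_add husum, hu0]
          congr 1
          exact tsum_congr husucc
        calc (∑' n : ℕ, |gfun envT (-1 - (n:ℤ)) - gfun env (ν0 + (-1 - (n:ℤ)))|)
            = ∑' n : ℕ, (w n + u n) * c := tsum_congr habs
          _ = (∑' n, w n + ∑' n, u n) * c := by
              rw [tsum_mul_right]
              congr 1
              exact Summable.tsum_add hWsum husum
          _ = (1 + 2 * Wser env (ν0 - 1)) * c := by
              rw [htu]
              have : Wser env (ν0 - 1) = ∑' n, w n := rfl
              rw [this]
              ring
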